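/- Let D be a Young diagram and let p, q be coprime positive integers with p + q > |D|. Then for every box c \in D, one has l(c)/(a(c)+1) \neq q/p and (l(c)+1)/a(c) \neq q/p; equivalently, p \cdot l(c) \neq q \cdot (a(c)+1) and p \cdot (l(c)+1) \neq q \cdot a(c). -/
import Mathlib


/-- A Young diagram: a finite down-closed subset of ℕ². -/
def IsYoung (D : Finset (ℕ × ℕ)) : Prop :=
  ∀ x y x' y', (x, y) ∈ D → x' ≤ x → y' ≤ y → (x', y') ∈ D

/-- Arm length of a box inside the diagram. -/
def arm (D : Finset (ℕ × ℕ)) (c : ℕ × ℕ) : ℕ :=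
  (D.filter fun d => d.2 = c.2 ∧ c.1 < d.1).card

/-- Leg length of a box inside the diagram. -/
def leg (D : Finset (ℕ × ℕ)) (c : ℕ × ℕ) : ℕ :=
  (D.filter fun d => d.1 = c.1 ∧ c.2 < d.2).card

/-- Arm length of a box in the complement of the diagram. -/
def coArm (D : Finset (ℕ × ℕ)) (c : ℕ × ℕ) : ℕ :=
  ((Finset.range c.1).filter fun x' => (x', c.2) ∉ D).card

/-- Leg length of a box in the complement of the diagram. -/
def coLeg (D : Finset (ℕ × ℕ)) (c : ℕ × ℕ) : ℕ :=
  ((Finset.range c.2).filter fun y' => (c.1, y') ∉ D).card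

lemma hook_le_card (D : Finset (ℕ × ℕ)) (c : ℕ × ℕ) (hc : c ∈ D) :
    arm D c + leg D c + 1 ≤ D.card := by
  classical
  set A := D.filter fun d => d.2 = c.2 ∧ c.1 < d.1 with hA
  set L := D.filter fun d => d.1 = c.1 ∧ c.2 < d.2 with hL
  have hdisj : Disjoint A L := by
    rw [Finset.disjoint_left]
    intro d hd hd'
    simp only [hA, hL, Finset.mem_filter] at hd hd'
    omega
  have hdisj2 : Disjoint (A ∪ L) ({c} : Finset (ℕ × ℕ)) := by
    rw [Finset.disjoint_right]
    intro d hd hd'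
    simp only [Finset.mem_singleton] at hd
    subst hd
    simp only [hA, hL, Finset.mem_union, Finset.mem_filter] at hd'
    omega
  have hsub : A ∪ L ∪ {c} ⊆ D := by
    intro d hd
    simp only [hA, hL, Finset.mem_union, Finset.mem_filter, Finset.mem_singleton] at hd
    rcases hd with (⟨h, _⟩ | ⟨h, _⟩) | h
    · exact h
    · exact h
    · exact h ▸ hc
  have := Finset.card_le_card hsub
  rw [Finset.card_union_of_disjoint hdisj2, Finset.card_union_of_disjoint hdisj,
    Finset.card_singleton] at this
  simpa [arm, leg, hA, hL] using this

theorem no_slope_equalities (D : Finset (ℕ × ℕ)) (hD : IsYoung D)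
    (p q : ℕ) (hp : 0 < p) (hq : 0 < q) (hpq : Nat.Coprime p q)
    (hn : D.card < p + q) :
    ∀ c ∈ D, p * leg D c ≠ q * (arm D c + 1) ∧ p * (leg D c + 1) ≠ q * arm D c := by
  intro c hc
  have hhook : arm D c + leg D c + 1 ≤ D.card := hook_le_card D c hc
  set a := arm D c
  set l := leg D c
  constructor
  · intro h
    have hdvd : p ∣ a + 1 := hpq.dvd_of_dvd_mul_left ⟨l, h.symm⟩
    obtain ⟨k, hk⟩ := hdvd
    have hk1 : 1 ≤ k := by nlinarith
    have hl : l = q * k := by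
      have : p * l = p * (q * k) := by rw [h, hk]; ring
      exact Nat.eq_of_mul_eq_mul_left hp this
    have : p + q ≤ a + l + 1 := by
      calc p + q ≤ p * k + q * k := by nlinarith
      _ = a + l + 1 := by rw [hl, ← hk]; ring
    omega
  · intro h
    have hdvd : p ∣ a := hpq.dvd_of_dvd_mul_left ⟨l + 1, h.symm⟩
    obtain ⟨k, hk⟩ := hdvd
    have hl : l + 1 = q * k := by
      have : p * (l + 1) = p * (q * k) := by rw [h, hk]; ring
      exact Nat.eq_of_mul_eq_mul_left hp this
    have hk1 : 1 ≤ k := by nlinarith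
    have : p + q ≤ a + l + 1 := by
      calc p + q ≤ p * k + q * k := by nlinarith
      _ = a + l + 1 := by rw [← hl, ← hk]; omega
    omega
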